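/- Suppose X is adapted to a sub-filtration 𝔾 = (𝓖_t)_{t∈[0,T]} of 𝔽 = (𝓕_t)_{t∈[0,T]}, and suppose that for some ε₀ > 0, for every h ∈ (0,T) and every 𝔽-stopping time τ taking values in [0, T−h), P(F_X^j(τ, h, log(1+ε₀), log(1+ε₀)) | 𝓕_τ) > 0 almost surely for each j ∈ {−1, 0, 1}. Then the same condition holds with respect to the smaller filtration 𝔾: for every h ∈ (0,T) and every 𝔾-stopping time τ taking values in [0, T−h), P(F_X^j(τ, h, log(1+ε₀), log(1+ε₀)) | 𝓖_τ) > 0 almost surely for each j ∈ {−1, 0, 1}. -/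

import Mathlib

open MeasureTheory Set Filter

noncomputable section

/-- The events `F_X^j(τ, h, δ, c)` from the paper: for `j = 0`,
`{sup_{t∈[0,T−τ)} |X_{τ+t} − X_τ| < δ}`; for `j = 1`,
`{sup_{t∈[0,h]} (X_{τ+t} − X_τ) < δ} ∩ {sup_{t∈[h,T−τ)} (X_{τ+t} − X_τ) < −c}`; for `j = −1`,
`{inf_{t∈[0,h]} (X_{τ+t} − X_τ) > −δ} ∩ {inf_{t∈[h,T−τ)} (X_{τ+t} − X_τ) > c}`. -/
def FXev {Ω : Type*} (X : ℝ → Ω → ℝ) (T : ℝ) (τ : Ω → ℝ) (h δ c : ℝ) (j : ℤ) : Set Ω :=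
  if j = 0 then
    {ω | sSup ((fun t => |X (τ ω + t) ω - X (τ ω) ω|) '' Ico 0 (T - τ ω)) < δ}
  else if j = 1 then
    {ω | sSup ((fun t => X (τ ω + t) ω - X (τ ω) ω) '' Icc 0 h) < δ ∧
         sSup ((fun t => X (τ ω + t) ω - X (τ ω) ω) '' Ico h (T - τ ω)) < -c}
  else
    {ω | -δ < sInf ((fun t => X (τ ω + t) ω - X (τ ω) ω) '' Icc 0 h) ∧
         c < sInf ((fun t => X (τ ω + t) ω - X (τ ω) ω) '' Ico h (T - τ ω))}

/-- Conditional expectation of an a.s. positive integrable function is a.s. positive. -/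
lemma condexp_pos_of_pos {Ω : Type*} {m' : MeasurableSpace Ω} [m0 : MeasurableSpace Ω] (hm : m' ≤ m0)
    (P : @Measure Ω m0) [IsFiniteMeasure P] {Y : Ω → ℝ}
    (hint : Integrable Y P) (hpos : ∀ᵐ ω ∂P, 0 < Y ω) :
    ∀ᵐ ω ∂P, 0 < (P[Y|m']) ω := by
  set g := P[Y|m'] with hg
  have hg_meas : StronglyMeasurable[m'] g := stronglyMeasurable_condExp
  have hA' : MeasurableSet[m'] {ω | g ω ≤ 0} := hg_meas.measurable measurableSet_Iic
  have hA0 : MeasurableSet {ω | g ω ≤ 0} := hm _ hA'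
  have hYnonneg : 0 ≤ᵐ[P] Y := hpos.mono fun ω h => h.le
  have hInt1 : ∫ ω in {ω | g ω ≤ 0}, g ω ∂P = ∫ ω in {ω | g ω ≤ 0}, Y ω ∂P :=
    setIntegral_condExp hm hint hA'
  have hle0 : ∫ ω in {ω | g ω ≤ 0}, g ω ∂P ≤ 0 :=
    integral_nonpos_of_ae ((ae_restrict_mem hA0).mono fun ω hω => hω)
  have hYres : 0 ≤ᵐ[P.restrict {ω | g ω ≤ 0}] Y := ae_restrict_of_ae hYnonneg
  have hge0 : 0 ≤ ∫ ω in {ω | g ω ≤ 0}, Y ω ∂P := integral_nonneg_of_ae hYres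
  have hzero : ∫ ω in {ω | g ω ≤ 0}, Y ω ∂P = 0 := le_antisymm (hInt1 ▸ hle0) hge0
  have hY0 : Y =ᵐ[P.restrict {ω | g ω ≤ 0}] 0 :=
    (setIntegral_eq_zero_iff_of_nonneg_ae hYres hint.integrableOn).mp hzero
  have hfalse : ∀ᵐ ω ∂P.restrict {ω | g ω ≤ 0}, False := by
    filter_upwards [hY0, ae_restrict_of_ae hpos] with ω h1 h2
    exact absurd h1 h2.ne'
  have hPA : P {ω | g ω ≤ 0} = 0 := by
    have := ae_iff.mp hfalse
    simpa [Measure.restrict_apply_univ] using this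
  rw [ae_iff]
  simpa [not_lt] using hPA

/-- Remark 2.3 of the paper: if `X` is adapted to a sub-filtration `𝔾` of `𝔽` and the
conditional positivity condition holds with respect to `𝔽`-stopping times and `ℱ_τ`,
then it also holds with respect to `𝔾`-stopping times and `𝒢_τ`. -/
theorem condition_stable_under_smaller_filtration {Ω : Type*} {m : MeasurableSpace Ω}
    (P : Measure Ω) [IsProbabilityMeasure P]
    (ℱ 𝒢 : Filtration ℝ m) (hsub : ∀ t : ℝ, 𝒢 t ≤ ℱ t)
    (T : ℝ) (hT : 0 < T)
    (X : ℝ → Ω → ℝ) (hadp : Adapted 𝒢 X)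
    (hcont : ∀ ω, ContinuousOn (fun t => X t ω) (Icc 0 T))
    (htriv : ∀ s : Set Ω, MeasurableSet[ℱ 0] s → P s = 0 ∨ P s = 1)
    (ε₀ : ℝ) (hε₀ : 0 < ε₀)
    (hcond : ∀ h ∈ Ioo (0:ℝ) T, ∀ (τ : Ω → ℝ) (hτ : IsStoppingTime ℱ (fun ω => (τ ω : WithTop ℝ))),
      (∀ ω, τ ω ∈ Ico (0:ℝ) (T - h)) →
      ∀ j ∈ ({-1, 0, 1} : Set ℤ),
      ∀ᵐ ω ∂P, 0 < (P[(FXev X T τ h (Real.log (1+ε₀)) (Real.log (1+ε₀)) j).indicator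
          (fun _ => (1:ℝ)) | hτ.measurableSpace]) ω) :
    ∀ h ∈ Ioo (0:ℝ) T, ∀ (τ : Ω → ℝ) (hτ : IsStoppingTime 𝒢 (fun ω => (τ ω : WithTop ℝ))),
      (∀ ω, τ ω ∈ Ico (0:ℝ) (T - h)) →
      ∀ j ∈ ({-1, 0, 1} : Set ℤ),
      ∀ᵐ ω ∂P, 0 < (P[(FXev X T τ h (Real.log (1+ε₀)) (Real.log (1+ε₀)) j).indicator
          (fun _ => (1:ℝ)) | hτ.measurableSpace]) ω := by
  intro h hh τ hτ𝒢 hτrange j hj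
  have hτℱ : IsStoppingTime ℱ (fun ω => (τ ω : WithTop ℝ)) := fun t => hsub t _ (hτ𝒢 t)
  have hle : hτ𝒢.measurableSpace ≤ hτℱ.measurableSpace := fun s hs => ⟨iSup_mono hsub s hs.1, fun t => hsub t _ (hs.2 t)⟩
  have hℱle : hτℱ.measurableSpace ≤ m := hτℱ.measurableSpace_le
  have h𝒢le : hτ𝒢.measurableSpace ≤ m := hτ𝒢.measurableSpace_le
  set f := (FXev X T τ h (Real.log (1+ε₀)) (Real.log (1+ε₀)) j).indicator
      (fun _ => (1:ℝ)) with hf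
  have hpos : ∀ᵐ ω ∂P, 0 < (P[f|hτℱ.measurableSpace]) ω :=
    hcond h hh τ hτℱ hτrange j hj
  have htower : P[P[f|hτℱ.measurableSpace]|hτ𝒢.measurableSpace]
      =ᵐ[P] P[f|hτ𝒢.measurableSpace] := condExp_condExp_of_le hle hℱle
  have hkey := condexp_pos_of_pos h𝒢le P integrable_condExp hpos
  filter_upwards [htower, hkey] with ω h1 h2
  rw [← h1]
  exact h2

end
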